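/- arXiv:math/0409479 — 2 statements merged into one kernel-verified Lean document; each statement's English description precedes it below -/
import Mathlib

section
/- For every ℤ-valued random walk s_n = ξ_1 + ⋯ + ξ_n with i.i.d. increments, and for every z ∈ ℤ and n ≥ 1: G(n) · P{ T(z) ≤ T(0) } · P{ z + s_k ≠ 0 for all k = 1, …, n } ≤ 1, where G(n) = Σ_{i=1}^n P{s_i = 0}. Equivalently, P_z{T(0) > n} ≤ 1/(G(n) · P_0{T(z) ≤ T(0)}) whenever the denominator is positive. -/
open MeasureTheory ProbabilityTheory Filter Set ENNReal NNReal

/-- The random walk `s_n = ξ_1 + ⋯ + ξ_n` (with `s_0 = 0`). -/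
noncomputable def walk {Ω : Type*} (ξ : ℕ → Ω → ℤ) (n : ℕ) (ω : Ω) : ℤ :=
  ∑ i ∈ Finset.Icc 1 n, ξ i ω

/-- The first passage time `T(z) = inf{n ≥ 1 : s_n = z}` (with `inf ∅ = ∞`). -/
noncomputable def passage {Ω : Type*} (ξ : ℕ → Ω → ℤ) (z : ℤ) (ω : Ω) : ℕ∞ :=
  sInf ((fun m : ℕ => (m : ℕ∞)) '' {m : ℕ | 1 ≤ m ∧ walk ξ m ω = z})

/-- `ξ` is a sequence of i.i.d. `ℤ`-valued random variables with common law `μ`. -/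
def IsIIDWalk {Ω : Type*} [MeasurableSpace Ω] (P : Measure Ω) (μ : Measure ℤ)
    (ξ : ℕ → Ω → ℤ) : Prop :=
  (∀ i, Measurable (ξ i)) ∧ (∀ i, P.map (ξ i) = μ) ∧
  iIndepFun ξ P

namespace LastExit

variable {Ω : Type*}

/-- The increment vector on the block `(c, c+a]`. -/
def traj (ξ : ℕ → Ω → ℤ) (c a : ℕ) (ω : Ω) : Fin a → ℤ := fun j => ξ (c + 1 + j) ω

/-- Partial sum of the first `k` coordinates. -/
def psum {a : ℕ} (x : Fin a → ℤ) (k : ℕ) : ℤ :=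
  ∑ j ∈ Finset.range k, if h : j < a then x ⟨j, h⟩ else 0

lemma walk_zero (ξ : ℕ → Ω → ℤ) (ω : Ω) : walk ξ 0 ω = 0 := by simp [walk]

lemma sum_Ioc (f : ℕ → ℤ) (c k : ℕ) :
    ∑ t ∈ Finset.Ioc c (c + k), f t = ∑ j ∈ Finset.range k, f (c + 1 + j) := by
  induction k with
  | zero => simp
  | succ k ih =>
    have : c + (k + 1) = (c + k) + 1 := by omega
    rw [this, Finset.sum_Ioc_succ_top (by omega), ih, Finset.sum_range_succ]
    congr 2
    omega

lemma walk_traj (ξ : ℕ → Ω → ℤ) (c a k : ℕ) (hk : k ≤ a) (ω : Ω) :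
    walk ξ (c + k) ω = walk ξ c ω + psum (traj ξ c a ω) k := by
  have h1 : ∀ m : ℕ, walk ξ m ω = ∑ t ∈ Finset.Ioc 0 m, ξ t ω := by
    intro m; rw [walk, ← Finset.Icc_add_one_left_eq_Ioc, zero_add]
  have h2 : psum (traj ξ c a ω) k = ∑ t ∈ Finset.Ioc c (c + k), ξ t ω := by
    rw [sum_Ioc (fun t => ξ t ω) c k, psum]
    apply Finset.sum_congr rfl
    intro j hj
    have hj' : j < a := lt_of_lt_of_le (Finset.mem_range.mp hj) hk
    rw [dif_pos hj']
    rfl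
  rw [h1, h1, h2, ← Finset.sum_Ioc_consecutive (fun t => ξ t ω) (Nat.zero_le c)
    (Nat.le_add_right c k)]

lemma psum_walk0 (ξ : ℕ → Ω → ℤ) (a k : ℕ) (hk : k ≤ a) (ω : Ω) :
    psum (traj ξ 0 a ω) k = walk ξ k ω := by
  have := walk_traj ξ 0 a k hk ω
  rw [zero_add, walk_zero, zero_add] at this
  exact this.symm


variable [MeasurableSpace Ω] {P : Measure Ω} {μ : Measure ℤ} {ξ : ℕ → Ω → ℤ}

lemma map_eq (h : IsIIDWalk P μ ξ) (i : ℕ) (s : Set ℤ) : P (ξ i ⁻¹' s) = μ s := by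
  rw [← h.2.1 i, Measure.map_apply (h.1 i) trivial]

lemma core (h : IsIIDWalk P μ ξ) (c a : ℕ) (y : Fin a → ℤ) :
    P {ω | ∀ j : Fin a, ξ (c + 1 + j) ω = y j} = ∏ j : Fin a, μ {y j} := by
  classical
  set Y : ℕ → ℤ := fun i => if hi : i - (c + 1) < a then y ⟨i - (c + 1), hi⟩ else 0 with hY
  have hYj : ∀ j : Fin a, Y (c + 1 + j) = y j := by
    intro j
    have e : c + 1 + (j : ℕ) - (c + 1) = (j : ℕ) := by omega
    simp only [hY, e, dif_pos j.isLt, Fin.eta]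
  set S : Finset ℕ := (Finset.range a).map ⟨fun j => c + 1 + j, add_right_injective (c + 1)⟩ with hS
  have hprod := h.2.2.measure_inter_preimage_eq_mul (sets := fun i => {Y i}) S
    (fun i _ => trivial)
  have hEv : (⋂ i ∈ S, ξ i ⁻¹' {Y i}) = {ω | ∀ j : Fin a, ξ (c + 1 + j) ω = y j} := by
    ext ω
    simp only [Set.mem_iInter, Set.mem_preimage, Set.mem_singleton_iff, hS,
      Finset.mem_map, Finset.mem_range, Function.Embedding.coeFn_mk, Set.mem_setOf_eq]
    constructor
    · intro H j
      have := H (c + 1 + j) ⟨j, j.isLt, rfl⟩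
      rwa [hYj] at this
    · rintro H i ⟨j, hj, rfl⟩
      rw [show Y (c + 1 + j) = y ⟨j, hj⟩ from hYj ⟨j, hj⟩]
      exact H ⟨j, hj⟩
  rw [hEv] at hprod
  rw [hprod, hS, Finset.prod_map]
  simp only [Function.Embedding.coeFn_mk]
  rw [show (∏ x ∈ Finset.range a, P (ξ (c + 1 + x) ⁻¹' {Y (c + 1 + x)}))
      = ∏ x ∈ Finset.range a, μ {Y (c + 1 + x)} from
      Finset.prod_congr rfl (fun j _ => map_eq h _ _),
    ← Fin.prod_univ_eq_prod_range (fun t => μ {Y (c + 1 + t)}) a]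
  exact Finset.prod_congr rfl fun j _ => by rw [hYj]


variable [IsProbabilityMeasure P] [IsProbabilityMeasure μ]

lemma traj_eq_iff (ξ : ℕ → Ω → ℤ) (c a : ℕ) (ω : Ω) (y : Fin a → ℤ) :
    traj ξ c a ω = y ↔ ∀ j : Fin a, ξ (c + 1 + j) ω = y j := by
  constructor
  · intro hy j; rw [← hy]; rfl
  · intro hy; funext j; exact hy j

lemma cyl (h : IsIIDWalk P μ ξ) (c a : ℕ) (A : Set (Fin a → ℤ)) :
    P {ω | traj ξ c a ω ∈ A} =
      ∑' y : Fin a → ℤ, A.indicator (fun y => ∏ j : Fin a, μ {y j}) y := by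
  classical
  set f : (Fin a → ℤ) → Set Ω := fun y =>
    if y ∈ A then {ω | ∀ j : Fin a, ξ (c + 1 + j) ω = y j} else ∅ with hf
  have huni : {ω | traj ξ c a ω ∈ A} = ⋃ y, f y := by
    ext ω
    simp only [Set.mem_iUnion, Set.mem_setOf_eq, hf]
    constructor
    · intro hA
      refine ⟨traj ξ c a ω, ?_⟩
      rw [if_pos hA]
      exact fun j => rfl
    · rintro ⟨y, hy⟩
      split_ifs at hy with hyA
      · rwa [show traj ξ c a ω = y from (traj_eq_iff ξ c a ω y).mpr hy]
      · exact absurd hy (Set.notMem_empty ω)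
  have hdisj : Pairwise (Function.onFun Disjoint f) := by
    intro y y' hne
    simp only [Function.onFun, hf]
    split_ifs with h1 h2 h2 <;> try simp
    rw [Set.disjoint_left]
    intro ω hω1 hω2
    exact hne (funext fun j => ((hω1 j).symm.trans (hω2 j)))
  have hmeas : ∀ y, MeasurableSet (f y) := by
    intro y
    simp only [hf]
    split_ifs
    · have : {ω | ∀ j : Fin a, ξ (c + 1 + j) ω = y j}
          = ⋂ j : Fin a, (ξ (c + 1 + j)) ⁻¹' {y j} := by
        ext ω; simp [Set.mem_iInter]
      rw [this]
      exact MeasurableSet.iInter fun j => (h.1 _) trivial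
    · exact MeasurableSet.empty
  rw [huni, measure_iUnion hdisj hmeas]
  refine tsum_congr fun y => ?_
  by_cases hyA : y ∈ A
  · simp only [hf, if_pos hyA]
    rw [core h c a y, Set.indicator_of_mem hyA]
  · simp [hf, if_neg hyA, Set.indicator_of_notMem hyA]

lemma meas_cyl (h : IsIIDWalk P μ ξ) (c a : ℕ) (A : Set (Fin a → ℤ)) :
    MeasurableSet {ω | traj ξ c a ω ∈ A} := by
  have : {ω | traj ξ c a ω ∈ A}
      = ⋃ y : A, ⋂ j : Fin a, (ξ (c + 1 + j)) ⁻¹' {(y : Fin a → ℤ) j} := by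
    ext ω
    simp only [Set.mem_setOf_eq, Set.mem_iUnion, Set.mem_iInter, Set.mem_preimage,
      Set.mem_singleton_iff]
    constructor
    · intro hA; exact ⟨⟨traj ξ c a ω, hA⟩, fun j => rfl⟩
    · rintro ⟨y, hy⟩
      rw [show traj ξ c a ω = (y : Fin a → ℤ) from (traj_eq_iff ξ c a ω _).mpr hy]
      exact y.2
  rw [this]
  exact MeasurableSet.iUnion fun y => MeasurableSet.iInter fun j => (h.1 _) trivial

lemma glue3 (ξ : ℕ → Ω → ℤ) (c a b d : ℕ) (y1 : Fin a → ℤ) (y2 : Fin b → ℤ)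
    (y3 : Fin d → ℤ) :
    {ω | traj ξ c a ω = y1 ∧ traj ξ (c + a) b ω = y2 ∧ traj ξ (c + a + b) d ω = y3}
      = {ω | ∀ j : Fin (a + b + d),
          ξ (c + 1 + j) ω = Fin.append (Fin.append y1 y2) y3 j} := by
  ext ω
  simp only [Set.mem_setOf_eq, traj_eq_iff]
  constructor
  · rintro ⟨h1, h2, h3⟩ j
    induction j using Fin.addCases with
    | left j =>
      rw [Fin.append_left]
      induction j using Fin.addCases with
      | left j0 =>
        rw [Fin.append_left]
        simpa using h1 j0
      | right j0 =>
        rw [Fin.append_right]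
        have e : c + 1 + ((Fin.castAdd d (Fin.natAdd a j0) : Fin (a + b + d)) : ℕ)
            = c + a + 1 + (j0 : ℕ) := by
          simp; omega
        rw [e]
        exact h2 j0
    | right j =>
      rw [Fin.append_right]
      have e : c + 1 + ((Fin.natAdd (a + b) j : Fin (a + b + d)) : ℕ)
          = c + a + b + 1 + (j : ℕ) := by
        simp; omega
      rw [e]
      exact h3 j
  · intro H
    refine ⟨fun j => ?_, fun j => ?_, fun j => ?_⟩
    · have := H (Fin.castAdd d (Fin.castAdd b j))
      rwa [Fin.append_left, Fin.append_left, Fin.coe_castAdd, Fin.coe_castAdd] at this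
    · have := H (Fin.castAdd d (Fin.natAdd a j))
      rw [Fin.append_left, Fin.append_right] at this
      rwa [show c + 1 + ((Fin.castAdd d (Fin.natAdd a j) : Fin (a + b + d)) : ℕ)
          = c + a + 1 + (j : ℕ) by simp; omega] at this
    · have := H (Fin.natAdd (a + b) j)
      rw [Fin.append_right] at this
      rwa [show c + 1 + ((Fin.natAdd (a + b) j : Fin (a + b + d)) : ℕ)
          = c + a + b + 1 + (j : ℕ) by simp; omega] at this

lemma split3 (h : IsIIDWalk P μ ξ) (c a b d : ℕ) (A : Set (Fin a → ℤ))
    (B : Set (Fin b → ℤ)) (C : Set (Fin d → ℤ)) :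
    P ({ω | traj ξ c a ω ∈ A} ∩ ({ω | traj ξ (c + a) b ω ∈ B}
        ∩ {ω | traj ξ (c + a + b) d ω ∈ C}))
      = P {ω | traj ξ 0 a ω ∈ A} * (P {ω | traj ξ 0 b ω ∈ B}
        * P {ω | traj ξ 0 d ω ∈ C}) := by
  classical
  set F : (Fin a → ℤ) × (Fin b → ℤ) × (Fin d → ℤ) → Set Ω := fun p =>
    if p.1 ∈ A ∧ p.2.1 ∈ B ∧ p.2.2 ∈ C then
      {ω | traj ξ c a ω = p.1 ∧ traj ξ (c + a) b ω = p.2.1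
        ∧ traj ξ (c + a + b) d ω = p.2.2}
    else ∅ with hF
  have huni : {ω | traj ξ c a ω ∈ A} ∩ ({ω | traj ξ (c + a) b ω ∈ B}
      ∩ {ω | traj ξ (c + a + b) d ω ∈ C}) = ⋃ p, F p := by
    ext ω
    simp only [Set.mem_inter_iff, Set.mem_setOf_eq, Set.mem_iUnion, hF]
    constructor
    · rintro ⟨h1, h2, h3⟩
      refine ⟨⟨traj ξ c a ω, traj ξ (c + a) b ω, traj ξ (c + a + b) d ω⟩, ?_⟩
      rw [if_pos ⟨h1, h2, h3⟩]
      exact ⟨rfl, rfl, rfl⟩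
    · rintro ⟨p, hp⟩
      split_ifs at hp with hmem
      · obtain ⟨e1, e2, e3⟩ := hp
        refine ⟨?_, ?_, ?_⟩
        · rw [e1]; exact hmem.1
        · rw [e2]; exact hmem.2.1
        · rw [e3]; exact hmem.2.2
      · exact absurd hp (Set.notMem_empty ω)
  have hdisj : Pairwise (Function.onFun Disjoint F) := by
    intro p q hne
    simp only [Function.onFun, hF]
    split_ifs <;> try simp
    rw [Set.disjoint_left]
    rintro ω ⟨e1, e2, e3⟩ ⟨f1, f2, f3⟩
    apply hne
    have hq1 : p.1 = q.1 := e1.symm.trans f1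
    have hq2 : p.2.1 = q.2.1 := e2.symm.trans f2
    have hq3 : p.2.2 = q.2.2 := e3.symm.trans f3
    rw [Prod.ext_iff, Prod.ext_iff]
    exact ⟨hq1, hq2, hq3⟩
  have hmeas : ∀ p, MeasurableSet (F p) := by
    intro p
    simp only [hF]
    split_ifs
    · rw [show {ω | traj ξ c a ω = p.1 ∧ traj ξ (c + a) b ω = p.2.1
          ∧ traj ξ (c + a + b) d ω = p.2.2}
        = {ω | ∀ j : Fin (a + b + d), ξ (c + 1 + j) ω
            = Fin.append (Fin.append p.1 p.2.1) p.2.2 j} from glue3 ξ c a b d _ _ _]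
      have : {ω | ∀ j : Fin (a + b + d), ξ (c + 1 + j) ω
          = Fin.append (Fin.append p.1 p.2.1) p.2.2 j}
          = ⋂ j : Fin (a + b + d), (ξ (c + 1 + j)) ⁻¹'
            {Fin.append (Fin.append p.1 p.2.1) p.2.2 j} := by
        ext ω; simp [Set.mem_iInter]
      rw [this]
      exact MeasurableSet.iInter fun j => (h.1 _) trivial
    · exact MeasurableSet.empty
  have hFP : ∀ p : (Fin a → ℤ) × (Fin b → ℤ) × (Fin d → ℤ),
      P (F p) = A.indicator (fun y => ∏ j : Fin a, μ {y j}) p.1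
        * (B.indicator (fun y => ∏ j : Fin b, μ {y j}) p.2.1
          * C.indicator (fun y => ∏ j : Fin d, μ {y j}) p.2.2) := by
    intro p
    simp only [hF]
    split_ifs with hmem
    · rw [glue3 ξ c a b d _ _ _, core h c (a + b + d) _]
      rw [Fin.prod_univ_add, Fin.prod_univ_add]
      simp only [Fin.append_left, Fin.append_right]
      rw [Set.indicator_of_mem hmem.1, Set.indicator_of_mem hmem.2.1,
        Set.indicator_of_mem hmem.2.2, mul_assoc]
    · push_neg at hmem
      by_cases h1 : p.1 ∈ A
      · by_cases h2 : p.2.1 ∈ B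
        · rw [Set.indicator_of_notMem (hmem h1 h2)]
          simp
        · rw [Set.indicator_of_notMem h2]
          simp
      · rw [Set.indicator_of_notMem h1]
        simp
  rw [huni, measure_iUnion hdisj hmeas]
  calc (∑' p, P (F p))
      = ∑' p : (Fin a → ℤ) × (Fin b → ℤ) × (Fin d → ℤ),
          A.indicator (fun y => ∏ j : Fin a, μ {y j}) p.1
            * (B.indicator (fun y => ∏ j : Fin b, μ {y j}) p.2.1
              * C.indicator (fun y => ∏ j : Fin d, μ {y j}) p.2.2) := tsum_congr hFP
    _ = ∑' (y1 : Fin a → ℤ) (q : (Fin b → ℤ) × (Fin d → ℤ)),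
          A.indicator (fun y => ∏ j : Fin a, μ {y j}) y1
            * (B.indicator (fun y => ∏ j : Fin b, μ {y j}) q.1
              * C.indicator (fun y => ∏ j : Fin d, μ {y j}) q.2) := ENNReal.tsum_prod'
    _ = ∑' (y1 : Fin a → ℤ), A.indicator (fun y => ∏ j : Fin a, μ {y j}) y1
          * ∑' (q : (Fin b → ℤ) × (Fin d → ℤ)),
            (B.indicator (fun y => ∏ j : Fin b, μ {y j}) q.1
              * C.indicator (fun y => ∏ j : Fin d, μ {y j}) q.2) :=
        tsum_congr fun y1 => ENNReal.tsum_mul_left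
    _ = (∑' (y1 : Fin a → ℤ), A.indicator (fun y => ∏ j : Fin a, μ {y j}) y1)
          * ∑' (q : (Fin b → ℤ) × (Fin d → ℤ)),
            (B.indicator (fun y => ∏ j : Fin b, μ {y j}) q.1
              * C.indicator (fun y => ∏ j : Fin d, μ {y j}) q.2) := ENNReal.tsum_mul_right
    _ = (∑' (y1 : Fin a → ℤ), A.indicator (fun y => ∏ j : Fin a, μ {y j}) y1)
          * ∑' (y2 : Fin b → ℤ) (y3 : Fin d → ℤ),
            (B.indicator (fun y => ∏ j : Fin b, μ {y j}) y2
              * C.indicator (fun y => ∏ j : Fin d, μ {y j}) y3) := by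
        congr 1
        exact ENNReal.tsum_prod'
    _ = (∑' (y1 : Fin a → ℤ), A.indicator (fun y => ∏ j : Fin a, μ {y j}) y1)
          * ∑' (y2 : Fin b → ℤ), (B.indicator (fun y => ∏ j : Fin b, μ {y j}) y2
              * ∑' (y3 : Fin d → ℤ), C.indicator (fun y => ∏ j : Fin d, μ {y j}) y3) := by
        congr 1
        exact tsum_congr fun y2 => ENNReal.tsum_mul_left
    _ = (∑' (y1 : Fin a → ℤ), A.indicator (fun y => ∏ j : Fin a, μ {y j}) y1)
          * ((∑' (y2 : Fin b → ℤ), B.indicator (fun y => ∏ j : Fin b, μ {y j}) y2)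
              * ∑' (y3 : Fin d → ℤ), C.indicator (fun y => ∏ j : Fin d, μ {y j}) y3) := by
        congr 1
        exact ENNReal.tsum_mul_right
    _ = P {ω | traj ξ 0 a ω ∈ A} * (P {ω | traj ξ 0 b ω ∈ B}
        * P {ω | traj ξ 0 d ω ∈ C}) := by
        rw [← cyl h 0 a A, ← cyl h 0 b B, ← cyl h 0 d C]

lemma split2 (h : IsIIDWalk P μ ξ) (c a b : ℕ) (A : Set (Fin a → ℤ))
    (B : Set (Fin b → ℤ)) :
    P ({ω | traj ξ c a ω ∈ A} ∩ {ω | traj ξ (c + a) b ω ∈ B})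
      = P {ω | traj ξ 0 a ω ∈ A} * P {ω | traj ξ 0 b ω ∈ B} := by
  have h3 := split3 h c a b 0 A B Set.univ
  have e1 : {ω : Ω | traj ξ (c + a + b) 0 ω ∈ (Set.univ : Set (Fin 0 → ℤ))} = Set.univ := by
    ext ω; simp
  have e2 : {ω : Ω | traj ξ 0 0 ω ∈ (Set.univ : Set (Fin 0 → ℤ))} = Set.univ := by
    ext ω; simp
  rw [e1, e2, Set.inter_univ, measure_univ, mul_one] at h3
  exact h3

/-! Event sets on increment vectors. -/

def A0 (i : ℕ) : Set (Fin i → ℤ) := {x | psum x i = 0}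

def A1 (z : ℤ) (m : ℕ) : Set (Fin m → ℤ) :=
  {x | psum x m = z ∧ ∀ k, 1 ≤ k → k < m → psum x k ≠ 0 ∧ psum x k ≠ z}

def A2 (z : ℤ) (n : ℕ) : Set (Fin n → ℤ) :=
  {x | ∀ k, 1 ≤ k → k ≤ n → z + psum x k ≠ 0}

def A3 (z : ℤ) (n : ℕ) : Set (Fin n → ℤ) :=
  {x | ∀ k, 1 ≤ k → k ≤ n → psum x k ≠ 0 ∧ psum x k ≠ z}

lemma mem_A0_iff (ξ : ℕ → Ω → ℤ) (i : ℕ) (ω : Ω) :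
    traj ξ 0 i ω ∈ A0 i ↔ walk ξ i ω = 0 := by
  simp only [A0, Set.mem_setOf_eq, psum_walk0 ξ i i le_rfl ω]

lemma ev_walk0 (ξ : ℕ → Ω → ℤ) (i : ℕ) :
    {ω : Ω | traj ξ 0 i ω ∈ A0 i} = {ω | walk ξ i ω = 0} :=
  Set.ext fun ω => mem_A0_iff ξ i ω

lemma ev_A2 (ξ : ℕ → Ω → ℤ) (z : ℤ) (n : ℕ) :
    {ω : Ω | traj ξ 0 n ω ∈ A2 z n}
      = {ω | ∀ k, 1 ≤ k → k ≤ n → z + walk ξ k ω ≠ 0} := by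
  ext ω
  simp only [A2, Set.mem_setOf_eq]
  refine forall_congr' fun k => forall_congr' fun h1 => forall_congr' fun h2 => ?_
  rw [psum_walk0 ξ n k h2 ω]

lemma shiftA1 (ξ : ℕ → Ω → ℤ) {z : ℤ} {m i : ℕ} {ω : Ω} (h0 : walk ξ i ω = 0)
    (h1 : traj ξ i m ω ∈ A1 z m) :
    walk ξ (i + m) ω = z ∧
      ∀ k, 1 ≤ k → k < m → walk ξ (i + k) ω ≠ 0 ∧ walk ξ (i + k) ω ≠ z := by
  obtain ⟨ha, hb⟩ := h1
  constructor
  · rw [walk_traj ξ i m m le_rfl ω, h0, zero_add, ha]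
  · intro k hk1 hk2
    have e := walk_traj ξ i m k (le_of_lt hk2) ω
    rw [h0, zero_add] at e
    rw [e]
    exact hb k hk1 hk2

lemma shiftA2 (ξ : ℕ → Ω → ℤ) {z v : ℤ} {n c : ℕ} {ω : Ω} (h0 : walk ξ c ω = v)
    (h1 : traj ξ c n ω ∈ A2 z n) :
    ∀ k, 1 ≤ k → k ≤ n → z + (walk ξ (c + k) ω - v) ≠ 0 := by
  intro k hk1 hk2
  have e := walk_traj ξ c n k hk2 ω
  rw [h0] at e
  have e2 : walk ξ (c + k) ω - v = psum (traj ξ c n ω) k := by omega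
  rw [e2]
  exact h1 k hk1 hk2

lemma shiftA3 (ξ : ℕ → Ω → ℤ) {z : ℤ} {n c : ℕ} {ω : Ω} (h0 : walk ξ c ω = 0)
    (h1 : traj ξ c n ω ∈ A3 z n) :
    ∀ k, 1 ≤ k → k ≤ n → walk ξ (c + k) ω ≠ 0 ∧ walk ξ (c + k) ω ≠ z := by
  intro k hk1 hk2
  have e := walk_traj ξ c n k hk2 ω
  rw [h0, zero_add] at e
  rw [e]
  exact h1 k hk1 hk2

lemma passage_le_of_walk {ξ : ℕ → Ω → ℤ} {ω : Ω} {z : ℤ} {m : ℕ} (h1 : 1 ≤ m)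
    (h2 : walk ξ m ω = z) : passage ξ z ω ≤ (m : ℕ∞) :=
  sInf_le ⟨m, ⟨h1, h2⟩, rfl⟩

lemma exists_of_passage_le {ξ : ℕ → Ω → ℤ} {ω : Ω} {z : ℤ} {m : ℕ}
    (hle : passage ξ z ω ≤ (m : ℕ∞)) : ∃ k, 1 ≤ k ∧ k ≤ m ∧ walk ξ k ω = z := by
  by_contra hc
  push_neg at hc
  have hge : ((m + 1 : ℕ) : ℕ∞) ≤ passage ξ z ω := by
    apply le_sInf
    rintro b ⟨k, ⟨hk1, hkz⟩, rfl⟩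
    have hk : m + 1 ≤ k := by
      by_contra hlt
      push_neg at hlt
      exact hc k hk1 (by omega) hkz
    show ((m + 1 : ℕ) : ℕ∞) ≤ (k : ℕ∞)
    exact_mod_cast hk
  have : ((m + 1 : ℕ) : ℕ∞) ≤ ((m : ℕ) : ℕ∞) := hge.trans hle
  have := Nat.cast_le.mp this
  omega

end LastExit

open LastExit

/-- Lemma 6.1: for every lattice random walk with i.i.d. increments,
`G(n) · P{T(z) ≤ T(0)} · P_z{T(0) > n} ≤ 1`. -/
theorem last_exit_decomposition_bound
    {Ω : Type*} [MeasurableSpace Ω] (P : Measure Ω) [IsProbabilityMeasure P]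
    (μ : Measure ℤ) [IsProbabilityMeasure μ]
    (ξ : ℕ → Ω → ℤ)
    (h : IsIIDWalk P μ ξ)
    (z : ℤ) (n : ℕ) (hn : 1 ≤ n) :
    (∑ i ∈ Finset.Icc 1 n, (P {ω | walk ξ i ω = 0}).toReal) *
      (P {ω | passage ξ z ω ≤ passage ξ 0 ω}).toReal *
      (P {ω | ∀ k : ℕ, 1 ≤ k → k ≤ n → z + walk ξ k ω ≠ 0}).toReal ≤ 1 := by
  classical
  suffices hkey :
      (∑ i ∈ Finset.Icc 1 n, P {ω | walk ξ i ω = 0}) *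
        P {ω | passage ξ z ω ≤ passage ξ 0 ω} *
        P {ω | ∀ k : ℕ, 1 ≤ k → k ≤ n → z + walk ξ k ω ≠ 0} ≤ 1 by
    have hne : ∀ i ∈ Finset.Icc 1 n, P {ω | walk ξ i ω = 0} ≠ ⊤ :=
      fun i _ => measure_ne_top P _
    rw [show (∑ i ∈ Finset.Icc 1 n, (P {ω | walk ξ i ω = 0}).toReal)
        = (∑ i ∈ Finset.Icc 1 n, P {ω | walk ξ i ω = 0}).toReal from
        (ENNReal.toReal_sum hne).symm, ← ENNReal.toReal_mul, ← ENNReal.toReal_mul]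
    calc ((∑ i ∈ Finset.Icc 1 n, P {ω | walk ξ i ω = 0}) *
          P {ω | passage ξ z ω ≤ passage ξ 0 ω} *
          P {ω | ∀ k : ℕ, 1 ≤ k → k ≤ n → z + walk ξ k ω ≠ 0}).toReal
        ≤ (1 : ℝ≥0∞).toReal := ENNReal.toReal_mono one_ne_top hkey
      _ = 1 := by simp
  rcases eq_or_ne z 0 with hz | hz
  · -- the case `z = 0`
    subst hz
    have hple : {ω : Ω | passage ξ 0 ω ≤ passage ξ 0 ω} = Set.univ := by
      ext ω; simp
    rw [hple, measure_univ, mul_one]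
    set W : ℕ → Set Ω := fun i =>
      {ω | traj ξ 0 i ω ∈ A0 i} ∩ {ω | traj ξ i n ω ∈ A2 0 n} with hW
    have hPW : ∀ i ∈ Finset.Icc 1 n, P {ω | walk ξ i ω = 0} *
        P {ω | ∀ k : ℕ, 1 ≤ k → k ≤ n → (0 : ℤ) + walk ξ k ω ≠ 0} = P (W i) := by
      intro i _
      have hs := split2 h 0 i n (A0 i) (A2 0 n)
      rw [zero_add] at hs
      simp only [hW]
      rw [hs, ev_walk0 ξ i, ev_A2 ξ 0 n]
    have hmeasW : ∀ i ∈ Finset.Icc 1 n, MeasurableSet (W i) :=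
      fun i _ => (meas_cyl h 0 i _).inter (meas_cyl h i n _)
    have hdisjW : (↑(Finset.Icc 1 n) : Set ℕ).PairwiseDisjoint W := by
      have key : ∀ i j, 1 ≤ i → j ≤ n → i < j → ∀ ω, ω ∈ W i → ω ∈ W j → False := by
        intro i j hi hj hij ω hω1 hω2
        obtain ⟨hA, hB⟩ := hω1
        obtain ⟨hA', -⟩ := hω2
        have hwi : walk ξ i ω = 0 := (mem_A0_iff ξ i ω).mp hA
        have hwj : walk ξ j ω = 0 := (mem_A0_iff ξ j ω).mp hA'
        have hcontra := shiftA2 ξ hwi hB (j - i) (by omega) (by omega)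
        rw [show i + (j - i) = j from by omega, hwj] at hcontra
        omega
      intro i hi j hj hne
      simp only [Finset.coe_Icc, Set.mem_Icc] at hi hj
      rw [Function.onFun, Set.disjoint_left]
      intro ω hω1 hω2
      rcases Nat.lt_or_ge i j with hij | hij
      · exact key i j hi.1 hj.2 hij ω hω1 hω2
      · exact key j i hj.1 hi.2 (by omega) ω hω2 hω1
    calc (∑ i ∈ Finset.Icc 1 n, P {ω | walk ξ i ω = 0}) *
          P {ω | ∀ k : ℕ, 1 ≤ k → k ≤ n → (0 : ℤ) + walk ξ k ω ≠ 0}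
        = ∑ i ∈ Finset.Icc 1 n, P {ω | walk ξ i ω = 0} *
            P {ω | ∀ k : ℕ, 1 ≤ k → k ≤ n → (0 : ℤ) + walk ξ k ω ≠ 0} :=
          Finset.sum_mul _ _ _
      _ = ∑ i ∈ Finset.Icc 1 n, P (W i) := Finset.sum_congr rfl hPW
      _ = P (⋃ i ∈ Finset.Icc 1 n, W i) := (measure_biUnion_finset hdisjW hmeasW).symm
      _ ≤ 1 := prob_le_one
  · -- the case `z ≠ 0`
    have hstep1 : P {ω | passage ξ z ω ≤ passage ξ 0 ω}
        ≤ (∑ m ∈ Finset.Icc 1 n, P {ω | traj ξ 0 m ω ∈ A1 z m})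
          + P {ω | traj ξ 0 n ω ∈ A3 z n} := by
      have hsub : {ω | passage ξ z ω ≤ passage ξ 0 ω}
          ⊆ (⋃ m ∈ Finset.Icc 1 n, {ω | traj ξ 0 m ω ∈ A1 z m})
            ∪ {ω | traj ξ 0 n ω ∈ A3 z n} := by
        intro ω hω
        by_cases hex : ∃ k, 1 ≤ k ∧ k ≤ n ∧ (walk ξ k ω = 0 ∨ walk ξ k ω = z)
        · left
          obtain ⟨k0, hk01, hk0n, hk0v⟩ := hex
          have hexQ : ∃ k, 1 ≤ k ∧ (walk ξ k ω = 0 ∨ walk ξ k ω = z) := ⟨k0, hk01, hk0v⟩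
          obtain ⟨hm1, hmv⟩ := Nat.find_spec hexQ
          have hmn : Nat.find hexQ ≤ n := le_trans (Nat.find_min' hexQ ⟨hk01, hk0v⟩) hk0n
          have hmin : ∀ k, 1 ≤ k → k < Nat.find hexQ →
              walk ξ k ω ≠ 0 ∧ walk ξ k ω ≠ z := by
            intro k hk1 hkm
            have hnm := Nat.find_min hexQ hkm
            push_neg at hnm
            exact hnm hk1
          have hmz : walk ξ (Nat.find hexQ) ω = z := by
            rcases hmv with h0 | hzz
            · exfalso
              have hp0 : passage ξ 0 ω ≤ ((Nat.find hexQ : ℕ) : ℕ∞) :=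
                passage_le_of_walk hm1 h0
              obtain ⟨k, hk1, hkm, hkz⟩ := exists_of_passage_le (le_trans hω hp0)
              rcases Nat.lt_or_ge k (Nat.find hexQ) with hlt | hge
              · exact (hmin k hk1 hlt).2 hkz
              · have hkeq : k = Nat.find hexQ := by omega
                rw [hkeq, h0] at hkz
                exact hz hkz.symm
            · exact hzz
          refine Set.mem_biUnion (Finset.mem_Icc.mpr ⟨hm1, hmn⟩) ?_
          simp only [A1, Set.mem_setOf_eq]
          refine ⟨?_, ?_⟩
          · rw [psum_walk0 ξ _ _ le_rfl ω]; exact hmz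
          · intro k hk1 hk2
            rw [psum_walk0 ξ _ k (le_of_lt hk2) ω]
            exact hmin k hk1 hk2
        · right
          push_neg at hex
          show traj ξ 0 n ω ∈ A3 z n
          simp only [A3, Set.mem_setOf_eq]
          intro k hk1 hk2
          rw [psum_walk0 ξ n k hk2 ω]
          exact hex k hk1 hk2
      calc P {ω | passage ξ z ω ≤ passage ξ 0 ω}
          ≤ P ((⋃ m ∈ Finset.Icc 1 n, {ω | traj ξ 0 m ω ∈ A1 z m})
            ∪ {ω | traj ξ 0 n ω ∈ A3 z n}) := measure_mono hsub
        _ ≤ P (⋃ m ∈ Finset.Icc 1 n, {ω | traj ξ 0 m ω ∈ A1 z m})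
            + P {ω | traj ξ 0 n ω ∈ A3 z n} := measure_union_le _ _
        _ ≤ (∑ m ∈ Finset.Icc 1 n, P {ω | traj ξ 0 m ω ∈ A1 z m})
            + P {ω | traj ξ 0 n ω ∈ A3 z n} :=
          add_le_add_left (measure_biUnion_finset_le _ _) _
    set E : ℕ × ℕ → Set Ω := fun q =>
      if q.2 = 0 then {ω | traj ξ 0 q.1 ω ∈ A0 q.1} ∩ {ω | traj ξ q.1 n ω ∈ A3 z n}
      else {ω | traj ξ 0 q.1 ω ∈ A0 q.1} ∩ ({ω | traj ξ q.1 q.2 ω ∈ A1 z q.2}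
        ∩ {ω | traj ξ (q.1 + q.2) n ω ∈ A2 z n}) with hEdef
    have hmeasE : ∀ q, MeasurableSet (E q) := by
      intro q
      simp only [hEdef]
      split_ifs
      · exact (meas_cyl h 0 q.1 _).inter (meas_cyl h q.1 n _)
      · exact (meas_cyl h 0 q.1 _).inter
          ((meas_cyl h q.1 q.2 _).inter (meas_cyl h (q.1 + q.2) n _))
    have hE0 : ∀ i : ℕ, P (E (i, 0))
        = P {ω | walk ξ i ω = 0} * P {ω | traj ξ 0 n ω ∈ A3 z n} := by
      intro i
      have hs := split2 h 0 i n (A0 i) (A3 z n)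
      rw [zero_add] at hs
      simp only [hEdef, if_pos rfl]
      rw [hs, ev_walk0 ξ i]
    have hE1 : ∀ i m : ℕ, 1 ≤ m → P (E (i, m))
        = P {ω | walk ξ i ω = 0} * (P {ω | traj ξ 0 m ω ∈ A1 z m}
          * P {ω | ∀ k : ℕ, 1 ≤ k → k ≤ n → z + walk ξ k ω ≠ 0}) := by
      intro i m hm
      have hs := split3 h 0 i m n (A0 i) (A1 z m) (A2 z n)
      rw [zero_add] at hs
      simp only [hEdef]
      rw [if_neg (by omega : ¬ (i, m).2 = 0)]
      rw [hs, ev_walk0 ξ i, ev_A2 ξ z n]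
    have hfirst : ∀ i m : ℕ, ∀ ω, ω ∈ E (i, m) → walk ξ i ω = 0 := by
      intro i m ω hω
      simp only [hEdef] at hω
      split_ifs at hω
      · exact (mem_A0_iff ξ i ω).mp hω.1
      · exact (mem_A0_iff ξ i ω).mp hω.1
    have hext1 : ∀ i m : ℕ, ∀ ω, 1 ≤ m → ω ∈ E (i, m) →
        walk ξ (i + m) ω = z
        ∧ (∀ k, 1 ≤ k → k < m → walk ξ (i + k) ω ≠ 0 ∧ walk ξ (i + k) ω ≠ z)
        ∧ (∀ k, 1 ≤ k → k ≤ n → walk ξ (i + m + k) ω ≠ 0) := by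
      intro i m ω hm hω
      have h0 : walk ξ i ω = 0 := hfirst i m ω hω
      simp only [hEdef] at hω
      rw [if_neg (by omega : ¬ (i, m).2 = 0)] at hω
      obtain ⟨-, h1, h2⟩ := hω
      obtain ⟨ha, hb⟩ := shiftA1 ξ h0 h1
      refine ⟨ha, hb, ?_⟩
      intro k hk1 hk2
      have hc := shiftA2 ξ ha h2 k hk1 hk2
      intro e
      exact hc (by rw [e]; ring)
    have hext0 : ∀ i : ℕ, ∀ ω, ω ∈ E (i, 0) →
        ∀ k, 1 ≤ k → k ≤ n → walk ξ (i + k) ω ≠ 0 ∧ walk ξ (i + k) ω ≠ z := by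
      intro i ω hω
      have h0 : walk ξ i ω = 0 := hfirst i 0 ω hω
      simp only [hEdef, if_pos rfl] at hω
      exact shiftA3 ξ h0 hω.2
    have hrange : ∀ i m : ℕ, ∀ ω, 1 ≤ m → ω ∈ E (i, m) → ∀ t, 1 ≤ t → t ≤ m + n →
        walk ξ (i + t) ω ≠ 0 := by
      intro i m ω hm hω t ht1 ht2
      obtain ⟨ha, hb, hc⟩ := hext1 i m ω hm hω
      rcases Nat.lt_trichotomy t m with hlt | heq | hgt
      · exact (hb t ht1 hlt).1
      · rw [heq, ha]; exact hz
      · have hd := hc (t - m) (by omega) (by omega)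
        rw [show i + m + (t - m) = i + t from by omega] at hd
        exact hd
    have hdisjE : (↑(Finset.Icc 1 n ×ˢ Finset.Icc 0 n) : Set (ℕ × ℕ)).PairwiseDisjoint E := by
      have keyij : ∀ i m j m' : ℕ, ∀ ω, 1 ≤ i → j ≤ n → i < j →
          ω ∈ E (i, m) → ω ∈ E (j, m') → False := by
        intro i m j m' ω hi hj hij hω1 hω2
        have hwj : walk ξ j ω = 0 := hfirst j m' ω hω2
        rcases Nat.eq_zero_or_pos m with rfl | hm1
        · have hc := (hext0 i ω hω1 (j - i) (by omega) (by omega)).1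
          rw [show i + (j - i) = j from by omega] at hc
          exact hc hwj
        · have hc := hrange i m ω hm1 hω1 (j - i) (by omega) (by omega)
          rw [show i + (j - i) = j from by omega] at hc
          exact hc hwj
      have keymm : ∀ i m m' : ℕ, ∀ ω, m < m' → m' ≤ n →
          ω ∈ E (i, m) → ω ∈ E (i, m') → False := by
        intro i m m' ω hmm hm' hω1 hω2
        obtain ⟨ha', hb', -⟩ := hext1 i m' ω (by omega) hω2
        rcases Nat.eq_zero_or_pos m with rfl | hm1
        · exact (hext0 i ω hω1 m' (by omega) hm').2 ha'
        · obtain ⟨ha, -, -⟩ := hext1 i m ω hm1 hω1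
          exact (hb' m hm1 hmm).2 ha
      rintro ⟨i, m⟩ hp ⟨j, m'⟩ hq hne
      simp only [Finset.mem_coe, Finset.mem_product, Finset.mem_Icc] at hp hq
      rw [Function.onFun, Set.disjoint_left]
      intro ω hω1 hω2
      rcases Nat.lt_trichotomy i j with hij | heq | hij
      · exact keyij i m j m' ω hp.1.1 hq.1.2 hij hω1 hω2
      · subst heq
        rcases Nat.lt_or_ge m m' with hlt | hge
        · exact keymm i m m' ω hlt hq.2.2 hω1 hω2
        · have hmm : m' < m := by
            rcases Nat.lt_or_ge m' m with hlt' | hge'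
            · exact hlt'
            · exact absurd (by omega : m = m') (fun e => hne (by rw [e]))
          exact keymm i m' m ω hmm hp.2.2 hω2 hω1
      · exact keyij j m' i m ω hq.1.1 hp.1.2 hij hω2 hω1
    have hsumE : ∑ q ∈ Finset.Icc 1 n ×ˢ Finset.Icc 0 n, P (E q) ≤ 1 := by
      rw [← measure_biUnion_finset hdisjE fun q _ => hmeasE q]
      exact prob_le_one
    calc (∑ i ∈ Finset.Icc 1 n, P {ω | walk ξ i ω = 0})
          * P {ω | passage ξ z ω ≤ passage ξ 0 ω}
          * P {ω | ∀ k : ℕ, 1 ≤ k → k ≤ n → z + walk ξ k ω ≠ 0}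
        ≤ (∑ i ∈ Finset.Icc 1 n, P {ω | walk ξ i ω = 0})
          * ((∑ m ∈ Finset.Icc 1 n, P {ω | traj ξ 0 m ω ∈ A1 z m})
            + P {ω | traj ξ 0 n ω ∈ A3 z n})
          * P {ω | ∀ k : ℕ, 1 ≤ k → k ≤ n → z + walk ξ k ω ≠ 0} :=
        mul_le_mul_left (mul_le_mul_right hstep1 _) _
      _ = ∑ i ∈ Finset.Icc 1 n,
            ((∑ m ∈ Finset.Icc 1 n, P {ω | walk ξ i ω = 0}
              * (P {ω | traj ξ 0 m ω ∈ A1 z m}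
                * P {ω | ∀ k : ℕ, 1 ≤ k → k ≤ n → z + walk ξ k ω ≠ 0}))
            + P {ω | walk ξ i ω = 0} * P {ω | traj ξ 0 n ω ∈ A3 z n}
              * P {ω | ∀ k : ℕ, 1 ≤ k → k ≤ n → z + walk ξ k ω ≠ 0}) := by
        rw [Finset.sum_mul, Finset.sum_mul]
        refine Finset.sum_congr rfl fun i _ => ?_
        rw [mul_add, add_mul, Finset.mul_sum, Finset.sum_mul]
        congr 1
        refine Finset.sum_congr rfl fun m _ => ?_
        ring
      _ ≤ ∑ i ∈ Finset.Icc 1 n,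
            ((∑ m ∈ Finset.Icc 1 n, P (E (i, m))) + P (E (i, 0))) := by
        refine Finset.sum_le_sum fun i _ => ?_
        refine add_le_add ?_ ?_
        · refine Finset.sum_le_sum fun m hm => ?_
          exact (hE1 i m (Finset.mem_Icc.mp hm).1).ge
        · calc P {ω | walk ξ i ω = 0} * P {ω | traj ξ 0 n ω ∈ A3 z n}
              * P {ω | ∀ k : ℕ, 1 ≤ k → k ≤ n → z + walk ξ k ω ≠ 0}
              ≤ P {ω | walk ξ i ω = 0} * P {ω | traj ξ 0 n ω ∈ A3 z n} * 1 :=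
            mul_le_mul_right prob_le_one _
            _ = P (E (i, 0)) := by rw [mul_one, hE0 i]
      _ = ∑ q ∈ Finset.Icc 1 n ×ˢ Finset.Icc 0 n, P (E q) := by
        rw [Finset.sum_product]
        refine Finset.sum_congr rfl fun i _ => ?_
        rw [show Finset.Icc 0 n = insert 0 (Finset.Icc 1 n) from by
          ext t; simp only [Finset.mem_Icc, Finset.mem_insert]; omega]
        rw [Finset.sum_insert (by simp), add_comm]
      _ ≤ 1 := hsumE
end

section
/- Let H : ℝ₊ → ℝ₊ be non-decreasing and measurable, and let E ⊆ [0,1] be compact with Ψ_H(E) = ∞. Then there exists a non-empty compact set G ⊆ E such that ψ_H(I ∩ G) = ∞ for every open interval I ⊆ [0,1] with rational endpoints that intersects G. -/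
open MeasureTheory Set ENNReal

/-- Standard Gaussian tail function. -/
noncomputable def gaussTail (z : ℝ) : ℝ :=
  ∫ x in Set.Ioi z, Real.exp (-(x ^ 2) / 2) / Real.sqrt (2 * Real.pi)

/-- Kolmogorov ε-entropy: maximal number of ε-separated points of `E`. -/
noncomputable def kolEntropy (E : Set ℝ) (ε : ℝ) : ℕ :=
  sSup {k : ℕ | ∃ F : Finset ℝ, ↑F ⊆ E ∧ F.card = k ∧
    ∀ x ∈ F, ∀ y ∈ F, x ≠ y → ε ≤ |x - y|}

/-- `ψ_H(E) = ∫_1^∞ H²(t) K_E(1/H²(t)) Φ̄(H(t)) dt/t`, as an extended real number. -/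
noncomputable def psiH (H : ℝ → ℝ) (E : Set ℝ) : ℝ≥0∞ :=
  ∫⁻ t in Set.Ioi (1 : ℝ),
    ENNReal.ofReal (H t ^ 2 * (kolEntropy E (1 / H t ^ 2) : ℝ) * gaussTail (H t) / t)

/-- `Ψ_H(E) < ∞`: `E` is a countable union of closed sets, each with finite `ψ_H`. -/
def PsiFin (H : ℝ → ℝ) (E : Set ℝ) : Prop :=
  ∃ En : ℕ → Set ℝ, (∀ n, IsClosed (En n)) ∧ E = ⋃ n, En n ∧ ∀ n, psiH H (En n) ≠ ⊤

lemma gaussTail_nonneg (z : ℝ) : 0 ≤ gaussTail z :=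
  integral_nonneg fun x => by positivity

lemma sep_card_le {F : Finset ℝ} {ε : ℝ} (hε : 0 < ε)
    (hF : ↑F ⊆ Set.Icc (0:ℝ) 1)
    (hsep : ∀ x ∈ F, ∀ y ∈ F, x ≠ y → ε ≤ |x - y|) :
    F.card ≤ ⌊1/ε⌋₊ + 1 := by
  have hinj : Set.InjOn (fun x => ⌊x/ε⌋₊) F := by
    intro x hx y hy hxy
    by_contra hne
    have h1 := hsep x (by exact_mod_cast hx) y (by exact_mod_cast hy) hne
    have hx0 : 0 ≤ x := (hF hx).1
    have hy0 : 0 ≤ y := (hF hy).1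
    have hfx : (⌊x/ε⌋₊ : ℝ) ≤ x/ε := Nat.floor_le (div_nonneg hx0 hε.le)
    have hfy : (⌊y/ε⌋₊ : ℝ) ≤ y/ε := Nat.floor_le (div_nonneg hy0 hε.le)
    have hfx' : x/ε < ⌊x/ε⌋₊ + 1 := Nat.lt_floor_add_one _
    have hfy' : y/ε < ⌊y/ε⌋₊ + 1 := Nat.lt_floor_add_one _
    have he : (⌊x/ε⌋₊ : ℝ) = (⌊y/ε⌋₊ : ℝ) := by exact_mod_cast congrArg Nat.cast hxy
    have hd : |x/ε - y/ε| < 1 := abs_sub_lt_iff.mpr ⟨by linarith, by linarith⟩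
    have habs : |x - y| < ε := by
      have hxy' : x - y = (x/ε - y/ε) * ε := by field_simp
      rw [hxy', abs_mul, abs_of_pos hε]
      nlinarith [abs_nonneg (x/ε - y/ε)]
    linarith
  calc F.card = (F.image fun x => ⌊x/ε⌋₊).card := (Finset.card_image_of_injOn hinj).symm
    _ ≤ (Finset.range (⌊1/ε⌋₊ + 1)).card := by
        apply Finset.card_le_card
        intro k hk
        simp only [Finset.mem_image] at hk
        obtain ⟨x, hx, rfl⟩ := hk
        simp only [Finset.mem_range, Nat.lt_succ_iff]
        exact Nat.floor_le_floor (by gcongr; exact (hF hx).2)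
    _ = _ := Finset.card_range _

lemma kolEntropy_mono {S T : Set ℝ} (hST : S ⊆ T) (hT : T ⊆ Set.Icc 0 1)
    {ε : ℝ} (hε : 0 < ε) : kolEntropy S ε ≤ kolEntropy T ε := by
  apply csSup_le_csSup
  · refine ⟨⌊1/ε⌋₊ + 1, ?_⟩
    rintro k ⟨F, hF, rfl, hsep⟩
    exact sep_card_le hε (hF.trans hT) hsep
  · exact ⟨0, ∅, by simp⟩
  · rintro k ⟨F, hF, hc, hsep⟩
    exact ⟨F, hF.trans hST, hc, hsep⟩

lemma psiH_mono (H : ℝ → ℝ) {S T : Set ℝ} (hST : S ⊆ T) (hT : T ⊆ Set.Icc 0 1) :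
    psiH H S ≤ psiH H T := by
  unfold psiH
  refine lintegral_mono fun t => ?_
  rcases eq_or_ne (H t) 0 with h0 | h0
  · simp [h0]
  rcases le_or_gt t 0 with ht | ht
  · have hnum : 0 ≤ H t ^ 2 * (kolEntropy S (1 / H t ^ 2) : ℝ) * gaussTail (H t) :=
      mul_nonneg (mul_nonneg (sq_nonneg _) (Nat.cast_nonneg _)) (gaussTail_nonneg _)
    have hle : H t ^ 2 * (kolEntropy S (1 / H t ^ 2) : ℝ) * gaussTail (H t) / t ≤ 0 := by
      rcases eq_or_lt_of_le ht with h | h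
      · simp [h]
      · exact div_nonpos_of_nonneg_of_nonpos hnum h.le
    rw [ENNReal.ofReal_eq_zero.mpr hle]
    exact zero_le
  · have hε : 0 < 1 / H t ^ 2 := by positivity
    apply ENNReal.ofReal_le_ofReal
    have hk : (kolEntropy S (1 / H t ^ 2) : ℝ) ≤ kolEntropy T (1 / H t ^ 2) :=
      Nat.cast_le.mpr (kolEntropy_mono hST hT hε)
    have hg := gaussTail_nonneg (H t)
    have hmul := mul_le_mul_of_nonneg_right
      (mul_le_mul_of_nonneg_left hk (sq_nonneg (H t))) hg
    exact div_le_div_of_nonneg_right hmul ht.le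
    -- fallback name if needed

lemma kolEntropy_empty (ε : ℝ) : kolEntropy ∅ ε = 0 := by
  unfold kolEntropy
  have h : {k : ℕ | ∃ F : Finset ℝ, ↑F ⊆ (∅ : Set ℝ) ∧ F.card = k ∧
      ∀ x ∈ F, ∀ y ∈ F, x ≠ y → ε ≤ |x - y|} = {0} := by
    ext k
    simp only [Set.mem_setOf_eq, Set.mem_singleton_iff]
    constructor
    · rintro ⟨F, hF, rfl, -⟩
      have : F = ∅ := Finset.coe_eq_empty.mp (Set.subset_empty_iff.mp hF)
      simp [this]
    · rintro rfl
      exact ⟨∅, by simp⟩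
  rw [h]
  exact csSup_singleton 0

lemma psiH_empty (H : ℝ → ℝ) : psiH H ∅ = 0 := by
  unfold psiH
  simp [kolEntropy_empty]

lemma psiFin_empty (H : ℝ → ℝ) : PsiFin H ∅ :=
  ⟨fun _ => ∅, fun _ => isClosed_empty, by simp, fun _ => by
    rw [psiH_empty]; exact zero_ne_top⟩

lemma psiFin_iUnion {ι : Type} [Countable ι] {H : ℝ → ℝ} {A : ι → Set ℝ}
    (h : ∀ i, PsiFin H (A i)) : PsiFin H (⋃ i, A i) := by
  classical
  choose En hcl hun hfin using h
  obtain ⟨f, hf⟩ := exists_injective_nat (ι × ℕ)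
  refine ⟨fun n => if hn : ∃ p : ι × ℕ, f p = n then En hn.choose.1 hn.choose.2 else ∅,
    ?_, ?_, ?_⟩
  · intro n
    by_cases hn : ∃ p : ι × ℕ, f p = n
    · simp only [dif_pos hn]; exact hcl _ _
    · simp only [dif_neg hn]; exact isClosed_empty
  · ext x
    simp only [Set.mem_iUnion]
    constructor
    · rintro ⟨i, hx⟩
      rw [hun i] at hx
      obtain ⟨k, hk⟩ := Set.mem_iUnion.mp hx
      refine ⟨f (i, k), ?_⟩
      have hex : ∃ p : ι × ℕ, f p = f (i, k) := ⟨(i, k), rfl⟩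
      rw [dif_pos hex]
      have : hex.choose = (i, k) := hf hex.choose_spec
      rw [this]
      exact hk
    · rintro ⟨n, hx⟩
      by_cases hn : ∃ p : ι × ℕ, f p = n
      · rw [dif_pos hn] at hx
        exact ⟨hn.choose.1, (hun _) ▸ Set.mem_iUnion.mpr ⟨hn.choose.2, hx⟩⟩
      · rw [dif_neg hn] at hx
        exact absurd hx (Set.notMem_empty x)
  · intro n
    by_cases hn : ∃ p : ι × ℕ, f p = n
    · simp only [dif_pos hn]; exact hfin _ _
    · simp only [dif_neg hn]; rw [psiH_empty]; exact zero_ne_top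

lemma psiFin_single {H : ℝ → ℝ} {C : Set ℝ} (hC : IsClosed C) (h : psiH H C ≠ ⊤) :
    PsiFin H C :=
  ⟨fun _ => C, fun _ => hC, (Set.iUnion_const C).symm, fun _ => h⟩

lemma psiFin_union {H : ℝ → ℝ} {S T : Set ℝ} (hS : PsiFin H S) (hT : PsiFin H T) :
    PsiFin H (S ∪ T) := by
  rw [Set.union_eq_iUnion]
  exact psiFin_iUnion fun b => by cases b <;> simpa

lemma ioo_eq_iUnion_Icc (a b : ℝ) :
    Set.Ioo a b = ⋃ n : ℕ, Set.Icc (a + 1/(n+1)) (b - 1/(n+1)) := by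
  ext x
  simp only [Set.mem_Ioo, Set.mem_iUnion, Set.mem_Icc]
  constructor
  · rintro ⟨h1, h2⟩
    obtain ⟨n, hn⟩ := exists_nat_one_div_lt (lt_min (sub_pos.2 h1) (sub_pos.2 h2))
    rw [lt_min_iff] at hn
    exact ⟨n, by linarith [hn.1], by linarith [hn.2]⟩
  · rintro ⟨n, h1, h2⟩
    have hp : (0:ℝ) < 1/((n:ℝ)+1) := by positivity
    constructor <;> linarith

lemma psiFin_ioo_inter_closed {H : ℝ → ℝ} {G : Set ℝ} (hG : IsClosed G)
    (hG1 : G ⊆ Set.Icc 0 1) (a b : ℝ) (h : psiH H (Set.Ioo a b ∩ G) ≠ ⊤) :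
    PsiFin H (Set.Ioo a b ∩ G) := by
  have hrw : Set.Ioo a b ∩ G
      = ⋃ n : ℕ, (Set.Icc (a + 1/(n+1)) (b - 1/(n+1)) ∩ G) := by
    rw [ioo_eq_iUnion_Icc, Set.iUnion_inter]
  rw [hrw]
  apply psiFin_iUnion
  intro n
  apply psiFin_single (isClosed_Icc.inter hG)
  have hsub : Set.Icc (a + 1/(n+1)) (b - 1/(n+1)) ∩ G ⊆ Set.Ioo a b ∩ G := by
    apply Set.inter_subset_inter_left
    rw [ioo_eq_iUnion_Icc]
    exact Set.subset_iUnion (fun m : ℕ => Set.Icc (a + 1/((m:ℝ)+1)) (b - 1/((m:ℝ)+1))) n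
  exact ne_top_of_le_ne_top h (psiH_mono H hsub (Set.inter_subset_right.trans hG1))

lemma psiFin_ioo_inter {H : ℝ → ℝ} {S : Set ℝ} (hS1 : S ⊆ Set.Icc 0 1)
    (h : PsiFin H S) (a b : ℝ) : PsiFin H (Set.Ioo a b ∩ S) := by
  obtain ⟨En, hcl, hun, hfin⟩ := h
  have hEn : ∀ n, En n ⊆ Set.Icc 0 1 := fun n => (hun ▸ Set.subset_iUnion En n).trans hS1
  rw [hun, Set.inter_iUnion]
  apply psiFin_iUnion
  intro n
  apply psiFin_ioo_inter_closed (hcl n) (hEn n) a b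
  exact ne_top_of_le_ne_top (hfin n) (psiH_mono H Set.inter_subset_right (hEn n))

/-- Lemma 2.10: if `Ψ_H(E) = ∞`, there is a nonempty compact `G ⊆ E` such that
`ψ_H(I ∩ G) = ∞` for every rational open interval `I` meeting `G`. -/
theorem exists_compact_subset_psiH_infinite
    (H : ℝ → ℝ)
    (hH0 : ∀ t, 0 ≤ t → 0 ≤ H t)
    (hHmono : MonotoneOn H (Set.Ici 0))
    (hHmeas : Measurable H)
    (E : Set ℝ) (hE : E ⊆ Set.Icc 0 1) (hEcomp : IsCompact E)
    (hPsi : ¬ PsiFin H E) :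
    ∃ G : Set ℝ, G ⊆ E ∧ G.Nonempty ∧ IsCompact G ∧
      ∀ p q : ℚ, Set.Ioo (p : ℝ) (q : ℝ) ⊆ Set.Icc 0 1 →
        (Set.Ioo (p : ℝ) (q : ℝ) ∩ G).Nonempty →
        psiH H (Set.Ioo (p : ℝ) (q : ℝ) ∩ G) = ⊤ := by
  classical
  set J : Set (ℚ × ℚ) := {pq | PsiFin H (Set.Ioo (pq.1 : ℝ) (pq.2 : ℝ) ∩ E)} with hJ
  set U : Set ℝ := ⋃ pq ∈ J, Set.Ioo ((pq.1 : ℝ)) ((pq.2 : ℝ)) with hU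
  have hUopen : IsOpen U := isOpen_biUnion fun _ _ => isOpen_Ioo
  set G : Set ℝ := E \ U with hG
  have hGE : G ⊆ E := Set.diff_subset
  have hGclosed : IsClosed G := hEcomp.isClosed.sdiff hUopen
  have hGcomp : IsCompact G := hEcomp.of_isClosed_subset hGclosed hGE
  have hGne : G.Nonempty := by
    rw [Set.nonempty_iff_ne_empty]
    intro hemp
    apply hPsi
    have hEU : E ⊆ U := by
      intro x hx
      by_contra hxU
      exact (Set.eq_empty_iff_forall_notMem.mp hemp x) ⟨hx, hxU⟩
    have hE' : E = ⋃ pq : J, (Set.Ioo ((pq.1.1 : ℝ)) ((pq.1.2 : ℝ)) ∩ E) := by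
      ext x
      simp only [Set.mem_iUnion, Set.mem_inter_iff]
      constructor
      · intro hx
        obtain ⟨pq, hpq, hxI⟩ := Set.mem_iUnion₂.mp (hEU hx)
        exact ⟨⟨pq, hpq⟩, hxI, hx⟩
      · rintro ⟨pq, -, hx⟩
        exact hx
    rw [hE']
    exact psiFin_iUnion fun pq => pq.2
  refine ⟨G, hGE, hGne, hGcomp, ?_⟩
  intro p q hsub hne
  have hpqJ : (p, q) ∉ J := by
    intro hmem
    obtain ⟨x, hxI, hxG⟩ := hne
    exact hxG.2 (Set.mem_biUnion hmem hxI)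
  by_contra hψ
  apply hpqJ
  show PsiFin H (Set.Ioo (p : ℝ) (q : ℝ) ∩ E)
  have hGsub1 : G ⊆ Set.Icc 0 1 := hGE.trans hE
  have hdecomp : Set.Ioo (p : ℝ) (q : ℝ) ∩ E =
      (Set.Ioo (p : ℝ) (q : ℝ) ∩ G) ∪
        ⋃ pq : J, (Set.Ioo (p : ℝ) (q : ℝ) ∩ (Set.Ioo ((pq.1.1 : ℝ)) ((pq.1.2 : ℝ)) ∩ E)) := by
    ext x
    constructor
    · rintro ⟨hxI, hxE⟩
      by_cases hxU : x ∈ U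
      · right
        obtain ⟨pq, hpq, hx'⟩ := Set.mem_iUnion₂.mp hxU
        exact Set.mem_iUnion.mpr ⟨⟨pq, hpq⟩, hxI, hx', hxE⟩
      · left
        exact ⟨hxI, hxE, hxU⟩
    · rintro (⟨hxI, hxE, -⟩ | hx)
      · exact ⟨hxI, hxE⟩
      · obtain ⟨pq, hxI, -, hxE⟩ := Set.mem_iUnion.mp hx
        exact ⟨hxI, hxE⟩
  rw [hdecomp]
  apply psiFin_union
  · exact psiFin_ioo_inter_closed hGclosed hGsub1 _ _ hψ
  · exact psiFin_iUnion fun pq =>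
      psiFin_ioo_inter (Set.inter_subset_right.trans hE) pq.2 _ _
end
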